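/- arXiv:2307.04850 — 2 statements merged into one kernel-verified Lean document; each statement's English description precedes it below -/
import Mathlib

section
/- Suppose for each i ∈ Fin d the event A_i = {|φ̂ i - φ i| ≤ ε/2} has probability at least 1 - δ/d, where φ̂ i are random estimates. Let D* be the (random) set of k indices with the largest estimates. Then with probability at least 1 - δ, every i ∈ D* satisfies φ i ≥ φ_(k) - ε, where φ_(k) is the k-th largest true value. -/
open MeasureTheory ENNReal

theorem stmt6 {Ω : Type*} [MeasurableSpace Ω] (μ : Measure Ω) [IsProbabilityMeasure μ]
    (d k : ℕ) (hk : k ≤ d) (ε δ : ℝ) (hε : ε ∈ Set.Ioo (0 : ℝ) 1) (hδ : δ ∈ Set.Ioo (0 : ℝ) 1)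
    (φ : Fin d → ℝ) (φhat : Fin d → Ω → ℝ)
    (hmeas : ∀ i, MeasurableSet {ω | |φhat i ω - φ i| ≤ ε / 2})
    (hconf : ∀ i, μ {ω | |φhat i ω - φ i| ≤ ε / 2}ᶜ ≤ ENNReal.ofReal (δ / d))
    (Dstar : Ω → Finset (Fin d)) (hD : ∀ ω, (Dstar ω).card = k)
    (hsel : ∀ ω, ∀ i ∈ Dstar ω, ∀ j ∉ Dstar ω, φhat j ω ≤ φhat i ω)
    (T : Finset (Fin d)) (hT : T.card = k) (t : ℝ) (hTt : ∀ j ∈ T, t ≤ φ j) :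
    1 - ENNReal.ofReal δ ≤ μ {ω | ∀ i ∈ Dstar ω, t - ε ≤ φ i} := by
  set E : Set Ω := ⋂ i, {ω | |φhat i ω - φ i| ≤ ε / 2} with hE
  have hEmeas : MeasurableSet E := MeasurableSet.iInter fun i => hmeas i
  have hsub : E ⊆ {ω | ∀ i ∈ Dstar ω, t - ε ≤ φ i} := by
    intro ω hω i hi
    have habs : ∀ j, |φhat j ω - φ j| ≤ ε / 2 := fun j => Set.mem_iInter.1 hω j
    by_cases hiT : i ∈ T
    · have := hTt i hiT; linarith [hε.1]
    · have hne : ¬ T ⊆ Dstar ω := by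
        intro hsub'
        have : T = Dstar ω := Finset.eq_of_subset_of_card_le hsub' (by rw [hD ω, hT])
        exact hiT (this ▸ hi)
      obtain ⟨j, hjT, hjD⟩ := Finset.not_subset.1 hne
      have h1 : φhat j ω ≤ φhat i ω := hsel ω i hi j hjD
      have h2 : t ≤ φ j := hTt j hjT
      have h3 := abs_le.1 (habs i)
      have h4 := abs_le.1 (habs j)
      linarith [h3.1, h4.2]
  have hcompl : μ Eᶜ ≤ ENNReal.ofReal δ := by
    rw [hE, Set.compl_iInter]
    refine le_trans (measure_iUnion_le _) ?_
    calc ∑' i : Fin d, μ {ω | |φhat i ω - φ i| ≤ ε / 2}ᶜ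
        ≤ ∑' _ : Fin d, ENNReal.ofReal (δ / d) := ENNReal.tsum_le_tsum fun i => hconf i
      _ = (d : ℝ≥0∞) * ENNReal.ofReal (δ / d) := by
          rw [tsum_fintype]; simp [Finset.sum_const, Finset.card_univ, nsmul_eq_mul]
      _ ≤ ENNReal.ofReal δ := by
          rcases Nat.eq_zero_or_pos d with h0 | hpos
          · simp [h0]
          · rw [← ENNReal.ofReal_natCast, ← ENNReal.ofReal_mul (by positivity)]
            apply ENNReal.ofReal_le_ofReal
            have hd : (0:ℝ) < d := Nat.cast_pos.2 hpos
            field_simp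
            exact le_rfl
  calc 1 - ENNReal.ofReal δ ≤ 1 - μ Eᶜ := tsub_le_tsub_left hcompl 1
    _ = μ E := by rw [← prob_compl_eq_one_sub hEmeas.compl, compl_compl]
    _ ≤ _ := measure_mono hsub
end

section
/- Let φ be antitone and suppose |φ̂ i - φ i| ≤ ε/2 only for indices i in a set S ⊇ {1, ..., k} (i.e., all true top-k indices have valid intervals), and additionally for every j ∉ S we have φ̂ j ≤ φ k - ε/2. Then the set D* of the k largest estimates satisfies D* ⊆ S and is an ε-approximate top-k solution. -/
theorem stmt11 (d k : ℕ) (hk0 : 0 < k) (hk : k ≤ d) (ε : ℝ) (hε : 0 < ε)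
    (φ φhat : Fin d → ℝ) (hsorted : Antitone φ)
    (S : Finset (Fin d)) (hS : ∀ i : Fin d, (i : ℕ) < k → i ∈ S)
    (hCI : ∀ i ∈ S, |φhat i - φ i| ≤ ε / 2)
    (hout : ∀ j ∉ S, φhat j < φ ⟨k - 1, by omega⟩ - ε / 2)
    (Dstar : Finset (Fin d)) (hD : Dstar.card = k)
    (hsel : ∀ i ∈ Dstar, ∀ j ∉ Dstar, φhat j ≤ φhat i) :
    Dstar ⊆ S ∧ ∀ i ∈ Dstar, φ ⟨k - 1, by omega⟩ - ε ≤ φ i := by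
  set kk : Fin d := ⟨k - 1, by omega⟩ with hkk
  -- the set of true top-k indices
  set K : Finset (Fin d) := Finset.univ.filter (fun i => (i : ℕ) < k) with hK
  have hKcard : K.card = k := by
    have : K = (Finset.univ : Finset (Fin k)).image (Fin.castLE hk) := by
      ext i
      simp only [hK, Finset.mem_filter, Finset.mem_univ, true_and, Finset.mem_image]
      constructor
      · intro h; exact ⟨⟨i, h⟩, rfl⟩
      · rintro ⟨j, -, rfl⟩; exact j.isLt
    rw [this, Finset.card_image_of_injective _ (Fin.castLE_injective hk)]
    simp
  -- key: every i ∈ Dstar has φhat i ≥ φ kk - ε/2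
  have key : ∀ i ∈ Dstar, φ kk - ε / 2 ≤ φhat i := by
    intro i hi
    by_cases hik : (i : ℕ) < k
    · -- then φ i ≥ φ kk and i ∈ S
      have hiS : i ∈ S := hS i hik
      have h1 : φ kk ≤ φ i := hsorted (by simp [hkk, Fin.le_def]; omega)
      have h2 := abs_le.mp (hCI i hiS)
      linarith [h2.1]
    · -- i.val ≥ k; find j with j.val < k, j ∉ Dstar
      by_cases hall : ∀ j ∈ K, j ∈ Dstar
      · exfalso
        have : insert i K ⊆ Dstar := by
          intro x hx
          rcases Finset.mem_insert.mp hx with rfl | hx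
          · exact hi
          · exact hall x hx
        have hiK : i ∉ K := by simp [hK, hik]
        have := Finset.card_le_card this
        rw [Finset.card_insert_of_notMem hiK, hKcard, hD] at this
        omega
      · push_neg at hall
        obtain ⟨j, hjK, hjD⟩ := hall
        have hjk : (j : ℕ) < k := by simpa [hK] using hjK
        have hjS : j ∈ S := hS j hjk
        have h1 : φ kk ≤ φ j := hsorted (by simp [hkk, Fin.le_def]; omega)
        have h2 := abs_le.mp (hCI j hjS)
        have h3 := hsel i hi j hjD
        linarith [h2.2]
  have hsub : Dstar ⊆ S := by
    intro i hi
    by_contra hiS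
    have h1 := hout i hiS
    linarith [key i hi]
  refine ⟨hsub, ?_⟩
  intro i hi
  have hiS := hsub hi
  have h2 := abs_le.mp (hCI i hiS)
  linarith [key i hi, h2.2]
end
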